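/- Let Q be a symmetric n×n real matrix, d ∈ ℝⁿ, A ∈ ℝ^{m×n}, b ∈ ℝᵐ. A point x̄ ∈ ℝⁿ is a local solution of the QP (i.e. x̄ ∈ F and there exists ε > 0 such that Φ(x̄) ≤ Φ(x) for all x ∈ F with ‖x − x̄‖ < ε) if and only if x̄ ∈ F and there exists λ̄ ∈ ℝᵐ with λ̄ ≥ 0, Qx̄ + d = −Aᵀλ̄, (Ax̄ − b)ᵀλ̄ = 0, and pᵀQp ≥ 0 for every p ∈ ℝⁿ satisfying a_iᵀp = 0 for all i with λ̄_i > 0 and a_iᵀp ≤ 0 for all i ∈ I_{x̄}. -/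

import Mathlib

set_option linter.unusedSectionVars false

open Matrix Finset Topology Filter
open scoped RealInnerProductSpace

section ConeLemmas

variable {E : Type*} [NormedAddCommGroup E] [InnerProductSpace ℝ E] [FiniteDimensional ℝ E]
variable {ι : Type*} [Fintype ι]

/-- Along a ray whose slope is nonpositive on active constraints, the constraints stay
satisfied for a short positive time. -/
lemma qp_ray_lemma (f s bb : ι → ℝ) (hf : ∀ i, f i ≤ bb i) (hs : ∀ i, f i = bb i → s i ≤ 0) :
    ∃ t : ℝ, 0 < t ∧ ∀ u : ℝ, 0 < u → u ≤ t → ∀ i, f i + u * s i ≤ bb i := by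
  classical
  set g : ι → ℝ := fun i => if s i ≤ 0 then 1 else (bb i - f i) / s i with hg
  have hgpos : ∀ i, 0 < g i := by
    intro i
    by_cases h : s i ≤ 0
    · simp [hg, h]
    · push_neg at h
      have hne : f i < bb i := by
        rcases lt_or_eq_of_le (hf i) with h' | h'
        · exact h'
        · exact absurd (hs i h') (not_le.mpr h)
      simp only [hg, if_neg (not_le.mpr h)]
      exact div_pos (by linarith) h
  set T : Finset ℝ := insert 1 (univ.image g) with hT
  have hTne : T.Nonempty := ⟨1, by simp [hT]⟩
  refine ⟨T.min' hTne, ?_, ?_⟩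
  · have hm := Finset.min'_mem T hTne
    rcases Finset.mem_insert.mp hm with h | h
    · rw [h]; norm_num
    · rcases Finset.mem_image.mp h with ⟨i, _, hi⟩
      rw [← hi]; exact hgpos i
  · intro u hu hut i
    by_cases h : s i ≤ 0
    · nlinarith [hf i]
    · push_neg at h
      have h1 : u ≤ g i :=
        le_trans hut (Finset.min'_le T (g i)
          (Finset.mem_insert_of_mem (Finset.mem_image_of_mem g (Finset.mem_univ i))))
      have h2 : u * s i ≤ bb i - f i := by
        rw [hg] at h1
        simp only [if_neg (not_le.mpr h)] at h1
        calc u * s i ≤ ((bb i - f i) / s i) * s i := by nlinarith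
          _ = bb i - f i := by field_simp
      linarith

/-- The finitely generated convex cone on the family `g`. -/
def coneOf (g : ι → E) : Set E :=
  {x | ∃ μ : ι → ℝ, (∀ i, 0 ≤ μ i) ∧ x = ∑ i, μ i • g i}

lemma zero_mem_coneOf (g : ι → E) : (0 : E) ∈ coneOf g :=
  ⟨0, fun _ => le_refl 0, by simp⟩

lemma coneOf_convex (g : ι → E) : Convex ℝ (coneOf g) := by
  rintro x ⟨μ, hμ, rfl⟩ y ⟨ν, hν, rfl⟩ s t hs ht _
  refine ⟨fun i => s * μ i + t * ν i,
    fun i => add_nonneg (mul_nonneg hs (hμ i)) (mul_nonneg ht (hν i)), ?_⟩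
  rw [Finset.smul_sum, Finset.smul_sum, ← Finset.sum_add_distrib]
  refine Finset.sum_congr rfl fun i _ => ?_
  rw [add_smul, smul_smul, smul_smul]

lemma smul_mem_coneOf {g : ι → E} {x : E} (hx : x ∈ coneOf g) {t : ℝ} (ht : 0 ≤ t) :
    t • x ∈ coneOf g := by
  rcases hx with ⟨μ, hμ, rfl⟩
  refine ⟨fun i => t * μ i, fun i => mul_nonneg ht (hμ i), ?_⟩
  rw [Finset.smul_sum]
  refine Finset.sum_congr rfl fun i _ => ?_
  simp [smul_smul]

lemma single_mem_coneOf (g : ι → E) (i : ι) : g i ∈ coneOf g := by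
  classical
  refine ⟨fun j => if j = i then 1 else 0, fun j => by by_cases h : j = i <;> simp [h], ?_⟩
  have : ∀ j : ι, (if j = i then (1:ℝ) else 0) • g j = if j = i then g j else 0 := by
    intro j; split <;> simp
  rw [Finset.sum_congr rfl fun j _ => this j, Finset.sum_ite_eq' univ i g]
  simp

end ConeLemmas
section ConeLemmas2

variable {E : Type*} [NormedAddCommGroup E] [InnerProductSpace ℝ E] [FiniteDimensional ℝ E]
variable {ι : Type*} [Fintype ι]

lemma qp_isCompact_capped (M : ℝ) :
    IsCompact {ν : ι → ℝ | (∀ i, 0 ≤ ν i) ∧ ∑ i, ν i ≤ M} := by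
  apply Metric.isCompact_of_isClosed_isBounded
  · have h1 : IsClosed {ν : ι → ℝ | ∀ i, 0 ≤ ν i} := by
      have : {ν : ι → ℝ | ∀ i, 0 ≤ ν i} = ⋂ i, {ν : ι → ℝ | 0 ≤ ν i} := by
        ext ν; simp [Set.mem_iInter]
      rw [this]
      exact isClosed_iInter fun i => isClosed_le continuous_const (continuous_apply i)
    have h2 : IsClosed {ν : ι → ℝ | ∑ i, ν i ≤ M} :=
      isClosed_le (by
        exact continuous_finset_sum _ fun i _ => continuous_apply i) continuous_const
    have : {ν : ι → ℝ | (∀ i, 0 ≤ ν i) ∧ ∑ i, ν i ≤ M}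
        = {ν : ι → ℝ | ∀ i, 0 ≤ ν i} ∩ {ν : ι → ℝ | ∑ i, ν i ≤ M} := rfl
    rw [this]
    exact h1.inter h2
  · apply Bornology.IsBounded.subset (Metric.isBounded_closedBall (x := (0 : ι → ℝ)) (r := max M 0))
    rintro ν ⟨hν, hsum⟩
    rw [Metric.mem_closedBall, dist_zero_right]
    refine (pi_norm_le_iff_of_nonneg (le_max_right M 0)).mpr fun i => ?_
    rw [Real.norm_eq_abs, abs_of_nonneg (hν i)]
    exact le_trans (Finset.single_le_sum (fun j _ => hν j) (Finset.mem_univ i))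
      (le_trans hsum (le_max_left M 0))

end ConeLemmas2
section ConeLemmas3

variable {E : Type*} [NormedAddCommGroup E] [InnerProductSpace ℝ E] [FiniteDimensional ℝ E]
variable {ι : Type*} [Fintype ι]

lemma qp_exists_min_rep (g : ι → E) {x : E} (hx : x ∈ coneOf g) :
    ∃ μ : ι → ℝ, (∀ i, 0 ≤ μ i) ∧ x = ∑ i, μ i • g i ∧
      ∀ ν : ι → ℝ, (∀ i, 0 ≤ ν i) → x = ∑ i, ν i • g i → ∑ i, μ i ≤ ∑ i, ν i := by
  classical
  rcases hx with ⟨μ₀, hμ₀, hx₀⟩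
  set S : Set (ι → ℝ) :=
    {μ | ((∀ i, 0 ≤ μ i) ∧ ∑ i, μ i ≤ ∑ i, μ₀ i) ∧ ∑ i, μ i • g i = x} with hS
  have hcont : Continuous fun μ : ι → ℝ => ∑ i, μ i • g i :=
    continuous_finset_sum _ fun i _ => (continuous_apply i).smul continuous_const
  have hScompact : IsCompact S := by
    have h2 : IsClosed {μ : ι → ℝ | ∑ i, μ i • g i = x} := isClosed_eq hcont continuous_const
    exact ((qp_isCompact_capped (∑ i, μ₀ i)).inter_right h2)
  have hSne : S.Nonempty := ⟨μ₀, ⟨⟨hμ₀, le_refl _⟩, hx₀.symm⟩⟩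
  obtain ⟨μ, hμS, hmin⟩ := hScompact.exists_isMinOn hSne
    (continuous_finset_sum univ (fun (i : ι) _ => continuous_apply i)).continuousOn
  refine ⟨μ, hμS.1.1, hμS.2.symm, ?_⟩
  intro ν hν hxν
  by_cases hle : ∑ i, ν i ≤ ∑ i, μ₀ i
  · exact hmin ⟨⟨hν, hle⟩, hxν.symm⟩
  · push_neg at hle
    have h1 : ∑ i, μ i ≤ ∑ i, μ₀ i := hμS.1.2
    linarith
end ConeLemmas3
section ConeLemmas4

variable {E : Type*} [NormedAddCommGroup E] [InnerProductSpace ℝ E] [FiniteDimensional ℝ E]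
variable {ι : Type*} [Fintype ι]

/-- Uniform bound on the size of a minimal conic representation. -/
lemma qp_rep_bound (g : ι → E) :
    ∃ c₀ : ℝ, 0 ≤ c₀ ∧ ∀ x ∈ coneOf g, ∃ ν : ι → ℝ, (∀ i, 0 ≤ ν i) ∧
      x = ∑ i, ν i • g i ∧ ∑ i, ν i ≤ c₀ * ‖x‖ := by
  classical
  by_contra hcon
  push_neg at hcon
  have hseq : ∀ j : ℕ, ∃ μ : ι → ℝ, (∀ i, 0 ≤ μ i) ∧
      (∀ ν : ι → ℝ, (∀ i, 0 ≤ ν i) → (∑ i, ν i • g i = ∑ i, μ i • g i) →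
        ∑ i, μ i ≤ ∑ i, ν i) ∧
      ((j : ℝ) + 1) * ‖∑ i, μ i • g i‖ < ∑ i, μ i := by
    intro j
    obtain ⟨x, hxcone, hxbad⟩ := hcon ((j : ℝ) + 1) (by positivity)
    obtain ⟨μ, hμ0, hμrep, hμmin⟩ := qp_exists_min_rep g hxcone
    refine ⟨μ, hμ0, ?_, ?_⟩
    · intro ν h1 h2
      exact hμmin ν h1 (hμrep.trans h2.symm)
    · rw [← hμrep]
      exact hxbad μ hμ0 hμrep
  choose μs hμ0 hμmin hμbig using hseq
  set Fsum : (ι → ℝ) → E := fun μ => ∑ i, μ i • g i with hF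
  have hFcont : Continuous Fsum :=
    continuous_finset_sum _ fun i _ => (continuous_apply i).smul continuous_const
  have hpos : ∀ j, 0 < ∑ i, μs j i := fun j =>
    lt_of_le_of_lt (by positivity) (hμbig j)
  set σ : ℕ → (ι → ℝ) := fun j i => (∑ i', μs j i')⁻¹ * μs j i with hσ
  have hσmem : ∀ j, σ j ∈ stdSimplex ℝ ι := by
    intro j
    refine ⟨fun i => mul_nonneg (le_of_lt (inv_pos.mpr (hpos j))) (hμ0 j i), ?_⟩
    rw [← Finset.mul_sum]
    exact inv_mul_cancel₀ (ne_of_gt (hpos j))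
  have hFσ : ∀ j, Fsum (σ j) = (∑ i', μs j i')⁻¹ • Fsum (μs j) := by
    intro j
    rw [hF]
    simp only [Finset.smul_sum]
    exact Finset.sum_congr rfl fun i _ => by rw [smul_smul]
  have hnorm : ∀ j, ‖Fsum (σ j)‖ ≤ 1 / ((j : ℝ) + 1) := by
    intro j
    rw [hFσ j, norm_smul, Real.norm_eq_abs, abs_of_pos (inv_pos.mpr (hpos j))]
    rw [inv_mul_eq_div, div_le_div_iff₀ (hpos j) (by positivity)]
    nlinarith [hμbig j, norm_nonneg (Fsum (μs j))]
  have htend0 : Filter.Tendsto (fun j => Fsum (σ j)) Filter.atTop (𝓝 0) :=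
    squeeze_zero_norm hnorm tendsto_one_div_add_atTop_nhds_zero_nat
  obtain ⟨σlim, hslmem, φ, hφmono, hφtend⟩ := (isCompact_stdSimplex ℝ ι).tendsto_subseq hσmem
  have hlim0 : Fsum σlim = 0 :=
    tendsto_nhds_unique ((hFcont.tendsto σlim).comp hφtend)
      (htend0.comp hφmono.tendsto_atTop)
  have hslsum : ∑ i, σlim i = 1 := hslmem.2
  set J0 : Finset ι := univ.filter (fun i => 0 < σlim i) with hJ0
  have hJ0ne : J0.Nonempty := by
    rw [hJ0, Finset.filter_nonempty_iff]
    by_contra hc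
    push_neg at hc
    have hz : ∀ i, σlim i = 0 := fun i => le_antisymm (hc i (mem_univ i)) (hslmem.1 i)
    rw [Finset.sum_congr rfl fun i _ => hz i] at hslsum
    simp at hslsum
  have hev : ∀ᶠ l : ℕ in Filter.atTop, ∀ i, 0 < σlim i → 0 < σ (φ l) i := by
    rw [Filter.eventually_all]
    intro i
    by_cases hi : 0 < σlim i
    · have hti : Filter.Tendsto (fun l => σ (φ l) i) Filter.atTop (𝓝 (σlim i)) :=
        ((continuous_apply i).tendsto σlim).comp hφtend
      filter_upwards [hti.eventually (eventually_gt_nhds hi)] with l hl _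
      exact hl
    · filter_upwards with l h
      exact absurd h hi
  obtain ⟨l, hl⟩ := hev.exists
  set ν : ι → ℝ := μs (φ l) with hν
  have hνpos : ∀ i ∈ J0, 0 < ν i := by
    intro i hi
    have hi' : 0 < σlim i := (Finset.mem_filter.mp hi).2
    have h1 : 0 < σ (φ l) i := hl i hi'
    have hinv : 0 < (∑ i', μs (φ l) i')⁻¹ := inv_pos.mpr (hpos (φ l))
    by_contra h
    push_neg at h
    have : σ (φ l) i ≤ 0 := mul_nonpos_of_nonneg_of_nonpos (le_of_lt hinv) h
    linarith
  set t : ℝ := J0.inf' hJ0ne (fun i => ν i / σlim i) with htdef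
  have ht : 0 < t := by
    rw [htdef, Finset.lt_inf'_iff]
    intro i hi
    exact div_pos (hνpos i hi) (Finset.mem_filter.mp hi).2
  set ν' : ι → ℝ := fun i => ν i - t * σlim i with hν'
  have hν'0 : ∀ i, 0 ≤ ν' i := by
    intro i
    by_cases hi : 0 < σlim i
    · have hmem : i ∈ J0 := Finset.mem_filter.mpr ⟨mem_univ i, hi⟩
      have h1 : t ≤ ν i / σlim i := Finset.inf'_le _ hmem
      rw [le_div_iff₀ hi] at h1
      simp only [hν']
      nlinarith
    · have : σlim i = 0 := le_antisymm (not_lt.mp hi) (hslmem.1 i)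
      simp [hν', hν, this, hμ0 (φ l) i]
  have hν'rep : ∑ i, ν' i • g i = ∑ i, ν i • g i := by
    simp only [hν', sub_smul, Finset.sum_sub_distrib]
    have h2 : ∑ i, (t * σlim i) • g i = t • Fsum σlim := by
      rw [hF, Finset.smul_sum]
      exact Finset.sum_congr rfl fun i _ => by rw [smul_smul]
    rw [h2, hlim0, smul_zero, sub_zero]
  have hν'sum : ∑ i, ν' i = ∑ i, ν i - t := by
    simp only [hν', Finset.sum_sub_distrib]
    rw [← Finset.mul_sum, hslsum, mul_one]
  have := hμmin (φ l) ν' hν'0 hν'rep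
  rw [hν'sum] at this
  have : (0:ℝ) < 0 := by linarith
  exact lt_irrefl 0 this

end ConeLemmas4
section ConeLemmas5

variable {E : Type*} [NormedAddCommGroup E] [InnerProductSpace ℝ E] [FiniteDimensional ℝ E]
variable {ι : Type*} [Fintype ι]

lemma qp_coneOf_isClosed (g : ι → E) : IsClosed (coneOf g) := by
  obtain ⟨c₀, hc₀, hbd⟩ := qp_rep_bound g
  apply IsSeqClosed.isClosed
  intro xs x hxs hx
  have hn : Tendsto (fun j => ‖xs j‖) atTop (𝓝 ‖x‖) := hx.norm
  obtain ⟨N, hN⟩ := Filter.eventually_atTop.mp (hn.eventually (eventually_le_nhds (lt_add_one ‖x‖)))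
  set M : ℝ := c₀ * (‖x‖ + 1) with hM
  have hrep : ∀ l : ℕ, ∃ ν : ι → ℝ, (∀ i, 0 ≤ ν i) ∧
      xs (N + l) = ∑ i, ν i • g i ∧ ∑ i, ν i ≤ M := by
    intro l
    obtain ⟨ν, h1, h2, h3⟩ := hbd (xs (N + l)) (hxs (N + l))
    refine ⟨ν, h1, h2, le_trans h3 ?_⟩
    exact mul_le_mul_of_nonneg_left (hN (N + l) (Nat.le_add_right N l)) hc₀
  choose νs hν0 hνrep hνM using hrep
  have hνmem : ∀ l, νs l ∈ {ν : ι → ℝ | (∀ i, 0 ≤ ν i) ∧ ∑ i, ν i ≤ M} :=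
    fun l => ⟨hν0 l, hνM l⟩
  obtain ⟨ν, hνlim, φ, hφmono, hφtend⟩ := (qp_isCompact_capped M).tendsto_subseq hνmem
  have hFcont : Continuous fun μ : ι → ℝ => ∑ i, μ i • g i :=
    continuous_finset_sum _ fun i _ => (continuous_apply i).smul continuous_const
  have h1 : Tendsto (fun l => ∑ i, (νs (φ l)) i • g i) atTop (𝓝 (∑ i, ν i • g i)) :=
    (hFcont.tendsto ν).comp hφtend
  have h2 : Tendsto (fun l => xs (N + φ l)) atTop (𝓝 x) := by
    apply hx.comp
    exact tendsto_atTop_mono (fun l => Nat.le_add_left (φ l) N) hφmono.tendsto_atTop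
  have h3 : (fun l => ∑ i, (νs (φ l)) i • g i) = fun l => xs (N + φ l) := by
    funext l
    exact (hνrep (φ l)).symm
  rw [h3] at h1
  exact ⟨ν, hνlim.1, (tendsto_nhds_unique h2 h1).symm ▸ rfl⟩

/-- Farkas' lemma. -/
lemma qp_farkas (g : ι → E) (y : E)
    (h : ∀ x : E, (∀ i, ⟪g i, x⟫ ≤ 0) → ⟪y, x⟫ ≤ 0) : y ∈ coneOf g := by
  by_contra hy
  obtain ⟨v, hvC, hvmin⟩ := exists_norm_eq_iInf_of_complete_convex ⟨0, zero_mem_coneOf g⟩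
    ((qp_coneOf_isClosed g).isComplete) (coneOf_convex g) y
  rw [norm_eq_iInf_iff_real_inner_le_zero (coneOf_convex g) hvC] at hvmin
  have h0 : ⟪y - v, v⟫ ≤ 0 := by
    have h2 := hvmin _ (smul_mem_coneOf hvC (by norm_num : (0:ℝ) ≤ 2))
    rw [two_smul] at h2
    simpa using h2
  have h0' : 0 ≤ ⟪y - v, v⟫ := by
    have h2 := hvmin 0 (zero_mem_coneOf g)
    rw [zero_sub, inner_neg_right] at h2
    linarith
  have hv0 : ⟪y - v, v⟫ = 0 := le_antisymm h0 h0'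
  have hgi : ∀ i, ⟪g i, y - v⟫ ≤ 0 := by
    intro i
    have h2 := hvmin _ (single_mem_coneOf g i)
    rw [inner_sub_right] at h2
    rw [real_inner_comm]
    linarith
  have hyp := h _ hgi
  have hyy : ⟪y, y - v⟫ = ‖y - v‖ ^ 2 + ⟪v, y - v⟫ := by
    have h4 := inner_add_left (𝕜 := ℝ) (y - v) v (y - v)
    rw [sub_add_cancel, real_inner_self_eq_norm_sq] at h4
    exact h4
  have hvy : ⟪v, y - v⟫ = 0 := by rw [real_inner_comm]; exact hv0
  have hne : y - v ≠ 0 := sub_ne_zero.mpr (fun hc => hy (hc ▸ hvC))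
  have hpos : 0 < ‖y - v‖ ^ 2 := pow_pos (norm_pos_iff.mpr hne) 2
  rw [hyy, hvy] at hyp
  linarith

end ConeLemmas5
section KeyBound

variable {E : Type*} [NormedAddCommGroup E] [InnerProductSpace ℝ E] [FiniteDimensional ℝ E]
variable {ι : Type*} [Fintype ι]

set_option maxHeartbeats 1000000 in
/-- Core quantitative second-order sufficiency bound (Contesse-type), via a
Hoffman-style error bound for the critical cone. -/
lemma qp_key_bound (a : ι → E) (lam : ι → ℝ) (hlam : ∀ i, 0 ≤ lam i)
    (act : ι → Prop) (hsupp : ∀ i, 0 < lam i → act i)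
    (c : E) (hc : c = -∑ i, lam i • a i)
    (Tq : E →L[ℝ] E)
    (soc : ∀ p : E, (∀ i, 0 < lam i → ⟪a i, p⟫ = 0) → (∀ i, act i → ⟪a i, p⟫ ≤ 0) →
      0 ≤ ⟪p, Tq p⟫) :
    ∃ ε : ℝ, 0 < ε ∧ ∀ p : E, (∀ i, act i → ⟪a i, p⟫ ≤ 0) → ‖p‖ ≤ ε →
      0 ≤ 2 * ⟪c, p⟫ + ⟪p, Tq p⟫ := by
  classical
  set Λ : ℝ := (insert (0:ℝ) (univ.image fun j => if 0 < lam j then (lam j)⁻¹ else 0)).max'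
      ⟨0, Finset.mem_insert_self 0 _⟩ with hΛdef
  have hΛ0 : 0 ≤ Λ := Finset.le_max' _ 0 (Finset.mem_insert_self 0 _)
  have hΛj : ∀ j, 0 < lam j → (lam j)⁻¹ ≤ Λ := by
    intro j hj
    have hmem : (if 0 < lam j then (lam j)⁻¹ else 0) ∈
        insert (0:ℝ) (univ.image fun j => if 0 < lam j then (lam j)⁻¹ else 0) :=
      Finset.mem_insert_of_mem (Finset.mem_image_of_mem _ (Finset.mem_univ j))
    have h1 := Finset.le_max' _ _ hmem
    exact le_trans (le_of_eq (if_pos hj).symm) h1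
  set g : ι ⊕ ι → E := Sum.elim (fun i => if act i then a i else 0)
      (fun i => if 0 < lam i then -a i else 0) with hgdef
  obtain ⟨c₀, hc₀, hrep⟩ := qp_rep_bound g
  set L : ℝ := c₀ * Λ with hLdef
  have hL0 : 0 ≤ L := mul_nonneg hc₀ hΛ0
  set D : Set E := ⋂ r : ι ⊕ ι, {q : E | ⟪g r, q⟫ ≤ 0} with hDdef
  have hDmem : ∀ q : E, q ∈ D ↔ ∀ r, ⟪g r, q⟫ ≤ 0 := fun q => Set.mem_iInter
  have hDclosed : IsClosed D := isClosed_iInter fun r =>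
    isClosed_le (Continuous.inner continuous_const continuous_id) continuous_const
  have hDconvex : Convex ℝ D := by
    intro x hx y hy s t hs ht hst
    refine (hDmem _).mpr fun r => ?_
    have hxr := (hDmem _).mp hx r
    have hyr := (hDmem _).mp hy r
    rw [inner_add_right, real_inner_smul_right, real_inner_smul_right]
    nlinarith
  have hD0 : (0:E) ∈ D := (hDmem 0).mpr fun r => by rw [inner_zero_right]
  have hDsmul : ∀ q ∈ D, ∀ t : ℝ, 0 ≤ t → t • q ∈ D := by
    intro q hq t ht
    refine (hDmem _).mpr fun r => ?_
    rw [real_inner_smul_right]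
    exact mul_nonpos_of_nonneg_of_nonpos ht ((hDmem q).mp hq r)
  have hDchar : ∀ q : E, q ∈ D ↔
      ((∀ i, act i → ⟪a i, q⟫ ≤ 0) ∧ (∀ i, 0 < lam i → ⟪a i, q⟫ = 0)) := by
    intro q
    constructor
    · intro hq
      have h1 : ∀ i, act i → ⟪a i, q⟫ ≤ 0 := by
        intro i hi
        have h2 := (hDmem q).mp hq (Sum.inl i)
        simp only [hgdef, Sum.elim_inl, if_pos hi] at h2
        exact h2
      refine ⟨h1, fun i hi => ?_⟩
      have h2 := (hDmem q).mp hq (Sum.inr i)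
      simp only [hgdef, Sum.elim_inr, if_pos hi, inner_neg_left] at h2
      exact le_antisymm (h1 i (hsupp i hi)) (by linarith)
    · rintro ⟨h1, h2⟩
      refine (hDmem q).mpr fun r => ?_
      rcases r with i | i
      · simp only [hgdef, Sum.elim_inl]
        split_ifs with h
        · exact h1 i h
        · rw [inner_zero_left]
      · simp only [hgdef, Sum.elim_inr]
        split_ifs with h
        · rw [inner_neg_left, h2 i h]
          norm_num
        · rw [inner_zero_left]
  -- positivity of the linear term, and the termwise bound
  have hcp_all : ∀ p : E, (∀ i, act i → ⟪a i, p⟫ ≤ 0) →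
      0 ≤ ⟪c, p⟫ ∧ ∀ j, 0 < lam j → -⟪a j, p⟫ ≤ Λ * ⟪c, p⟫ := by
    intro p hp
    have hterms : ∀ i, 0 ≤ lam i * -⟪a i, p⟫ := by
      intro i
      rcases lt_or_eq_of_le (hlam i) with h | h
      · have h3 := hp i (hsupp i h)
        nlinarith
      · rw [← h]
        norm_num
    have hcp' : ⟪c, p⟫ = ∑ i, lam i * -⟪a i, p⟫ := by
      rw [hc, inner_neg_left, sum_inner, ← Finset.sum_neg_distrib]
      exact Finset.sum_congr rfl fun i _ => by rw [real_inner_smul_left]; ring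
    have hcp : 0 ≤ ⟪c, p⟫ := hcp' ▸ Finset.sum_nonneg fun i _ => hterms i
    refine ⟨hcp, fun j hj => ?_⟩
    have h1 : lam j * -⟪a j, p⟫ ≤ ⟪c, p⟫ := by
      rw [hcp']
      exact Finset.single_le_sum (fun i _ => hterms i) (Finset.mem_univ j)
    have h2 : -⟪a j, p⟫ ≤ (lam j)⁻¹ * ⟪c, p⟫ := by
      rw [inv_mul_eq_div, le_div_iff₀ hj]
      calc -⟪a j, p⟫ * lam j = lam j * -⟪a j, p⟫ := by ring
        _ ≤ ⟪c, p⟫ := h1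
    have h3 : (lam j)⁻¹ * ⟪c, p⟫ ≤ Λ * ⟪c, p⟫ := mul_le_mul_of_nonneg_right (hΛj j hj) hcp
    linarith
  -- Hoffman-type error bound for the critical cone
  have hoffman : ∀ p : E, (∀ i, act i → ⟪a i, p⟫ ≤ 0) →
      ∃ v ∈ D, ‖p - v‖ ≤ L * ⟪c, p⟫ := by
    intro p hp
    obtain ⟨hcp, hterm⟩ := hcp_all p hp
    obtain ⟨v, hvD, hvar⟩ := exists_norm_eq_iInf_of_complete_convex ⟨0, hD0⟩
      hDclosed.isComplete hDconvex p
    rw [norm_eq_iInf_iff_real_inner_le_zero hDconvex hvD] at hvar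
    refine ⟨v, hvD, ?_⟩
    have hpvv : ⟪p - v, v⟫ = 0 := by
      have ha1 := hvar _ (hDsmul v hvD 2 (by norm_num))
      rw [two_smul] at ha1
      have ha1' : ⟪p - v, v⟫ ≤ 0 := by simpa using ha1
      have ha2 := hvar 0 hD0
      rw [zero_sub, inner_neg_right] at ha2
      linarith
    have hdir : ∀ w : E, (∀ r, ⟪g r, v⟫ = 0 → ⟪g r, w⟫ ≤ 0) → ⟪p - v, w⟫ ≤ 0 := by
      intro w hw
      obtain ⟨t, ht, hray⟩ := qp_ray_lemma (fun r => ⟪g r, v⟫) (fun r => ⟪g r, w⟫)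
        (fun _ => 0) (fun r => (hDmem v).mp hvD r) hw
      have hvw : v + t • w ∈ D := by
        refine (hDmem _).mpr fun r => ?_
        have h5 := hray t ht le_rfl r
        rw [inner_add_right, real_inner_smul_right]
        linarith
      have h5 := hvar _ hvw
      rw [add_sub_cancel_left, real_inner_smul_right] at h5
      nlinarith
    have hfk : p - v ∈ coneOf (fun r => if ⟪g r, v⟫ = 0 then g r else 0) := by
      apply qp_farkas
      intro x hx
      apply hdir
      intro r hr
      have h6 := hx r
      rwa [if_pos hr] at h6
    have hmem : p - v ∈ coneOf g := by
      obtain ⟨μ, hμ0, hμrep⟩ := hfk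
      refine ⟨fun r => if ⟪g r, v⟫ = 0 then μ r else 0,
        fun r => by by_cases h : ⟪g r, v⟫ = 0 <;> simp [h, hμ0 r], ?_⟩
      rw [hμrep]
      refine Finset.sum_congr rfl fun r _ => ?_
      by_cases h : ⟪g r, v⟫ = 0 <;> simp [h]
    obtain ⟨ν, hν0, hνrep, hνbd⟩ := hrep (p - v) hmem
    have hβ0 : 0 ≤ Λ * ⟪c, p⟫ := mul_nonneg hΛ0 hcp
    have hgrp : ∀ r, ⟪g r, p⟫ ≤ Λ * ⟪c, p⟫ := by
      intro r
      rcases r with i | i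
      · simp only [hgdef, Sum.elim_inl]
        split_ifs with h
        · exact le_trans (hp i h) hβ0
        · rw [inner_zero_left]; exact hβ0
      · simp only [hgdef, Sum.elim_inr]
        split_ifs with h
        · rw [inner_neg_left]; exact hterm i h
        · rw [inner_zero_left]; exact hβ0
    have hn2 : ‖p - v‖ ^ 2 = ⟪p - v, p⟫ := by
      have h6 := inner_add_right (𝕜 := ℝ) (p - v) (p - v) v
      rw [sub_add_cancel, real_inner_self_eq_norm_sq, hpvv, add_zero] at h6
      exact h6.symm
    have hsum : ⟪p - v, p⟫ = ∑ r, ν r * ⟪g r, p⟫ := by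
      rw [hνrep, sum_inner]
      exact Finset.sum_congr rfl fun r _ => real_inner_smul_left _ _ _
    have hbd2 : ∑ r, ν r * ⟪g r, p⟫ ≤ (∑ r, ν r) * (Λ * ⟪c, p⟫) := by
      rw [Finset.sum_mul]
      exact Finset.sum_le_sum fun r _ => mul_le_mul_of_nonneg_left (hgrp r) (hν0 r)
    have hfinal : ‖p - v‖ ^ 2 ≤ c₀ * ‖p - v‖ * (Λ * ⟪c, p⟫) := by
      calc ‖p - v‖ ^ 2 = ∑ r, ν r * ⟪g r, p⟫ := by rw [hn2, hsum]
        _ ≤ (∑ r, ν r) * (Λ * ⟪c, p⟫) := hbd2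
        _ ≤ (c₀ * ‖p - v‖) * (Λ * ⟪c, p⟫) := mul_le_mul_of_nonneg_right hνbd hβ0
        _ = c₀ * ‖p - v‖ * (Λ * ⟪c, p⟫) := rfl
    rcases eq_or_lt_of_le (norm_nonneg (p - v)) with h | h
    · rw [← h]
      exact mul_nonneg hL0 hcp
    · have h7 : ‖p - v‖ * ‖p - v‖ ≤ (L * ⟪c, p⟫) * ‖p - v‖ := by
        have h8 := hfinal
        rw [pow_two] at h8
        rw [hLdef]
        nlinarith [h8]
      exact le_of_mul_le_mul_right h7 h
  -- now the final assembly
  set Cq : ℝ := ‖Tq‖ with hCqdef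
  set Cn : ℝ := ‖c‖ with hCndef
  have hCq0 : 0 ≤ Cq := norm_nonneg _
  have hCn0 : 0 ≤ Cn := norm_nonneg _
  set X : ℝ := Cq * L * (2 + 3 * (L * Cn)) with hXdef
  have hX0 : 0 ≤ X := by
    apply mul_nonneg (mul_nonneg hCq0 hL0)
    nlinarith [mul_nonneg hL0 hCn0]
  have hX1 : (0:ℝ) < X + 1 := by linarith
  set ε : ℝ := min 1 (2 / (X + 1)) with hεdef
  have hε0 : 0 < ε := lt_min one_pos (by positivity)
  have hεX : ε * X ≤ 2 := by
    have h2 : ε ≤ 2 / (X + 1) := min_le_right _ _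
    calc ε * X ≤ (2 / (X + 1)) * X := mul_le_mul_of_nonneg_right h2 hX0
      _ ≤ 2 := by
        rw [div_mul_eq_mul_div, div_le_iff₀ hX1]
        nlinarith
  refine ⟨ε, hε0, ?_⟩
  intro p hp hpε
  obtain ⟨v, hvD, hw⟩ := hoffman p hp
  have hs0 : 0 ≤ ⟪c, p⟫ := (hcp_all p hp).1
  have hsC : ⟪c, p⟫ ≤ Cn * ε := by
    have h1 : ⟪c, p⟫ ≤ ‖c‖ * ‖p‖ := real_inner_le_norm c p
    have h2 : ‖c‖ * ‖p‖ ≤ Cn * ε := mul_le_mul_of_nonneg_left hpε hCn0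
    linarith
  have hwn : ‖p - v‖ ≤ L * ⟪c, p⟫ := hw
  have hvn : ‖v‖ ≤ ‖p‖ + ‖p - v‖ := by
    simpa using norm_sub_le p (p - v)
  have hvTv : 0 ≤ ⟪v, Tq v⟫ := soc v ((hDchar v).mp hvD).2 ((hDchar v).mp hvD).1
  have hexp : ⟪p, Tq p⟫ = ⟪v, Tq v⟫ + ⟪v, Tq (p - v)⟫ + ⟪p - v, Tq v⟫
      + ⟪p - v, Tq (p - v)⟫ := by
    have hpvw : p = v + (p - v) := by abel
    calc ⟪p, Tq p⟫ = ⟪v + (p - v), Tq (v + (p - v))⟫ := by rw [← hpvw]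
      _ = ⟪v, Tq v⟫ + ⟪v, Tq (p - v)⟫ + ⟪p - v, Tq v⟫ + ⟪p - v, Tq (p - v)⟫ := by
        rw [map_add, inner_add_left, inner_add_right, inner_add_right]
        ring
  have hTbound : ∀ x y : E, |⟪x, Tq y⟫| ≤ Cq * ‖y‖ * ‖x‖ := by
    intro x y
    calc |⟪x, Tq y⟫| ≤ ‖x‖ * ‖Tq y‖ := abs_real_inner_le_norm x (Tq y)
      _ ≤ ‖x‖ * (Cq * ‖y‖) := mul_le_mul_of_nonneg_left (Tq.le_opNorm y) (norm_nonneg x)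
      _ = Cq * ‖y‖ * ‖x‖ := by ring
  have t1 := abs_le.mp (hTbound v (p - v))
  have t2 := abs_le.mp (hTbound (p - v) v)
  have t3 := abs_le.mp (hTbound (p - v) (p - v))
  have hwε : ‖p - v‖ ≤ L * (Cn * ε) := by
    calc ‖p - v‖ ≤ L * ⟪c, p⟫ := hwn
      _ ≤ L * (Cn * ε) := mul_le_mul_of_nonneg_left hsC hL0
  have hA : Cq * ‖p - v‖ ≤ Cq * (L * ⟪c, p⟫) := mul_le_mul_of_nonneg_left hwn hCq0
  have hB : 2 * ‖v‖ + ‖p - v‖ ≤ 2 * ε + 3 * (L * (Cn * ε)) := by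
    have h9 : ‖p‖ ≤ ε := hpε
    linarith [hvn, hwε]
  have hBnn : 0 ≤ 2 * ‖v‖ + ‖p - v‖ := by positivity
  have hN : Cq * ‖p - v‖ * (2 * ‖v‖ + ‖p - v‖)
      ≤ (Cq * (L * ⟪c, p⟫)) * (2 * ε + 3 * (L * (Cn * ε))) :=
    mul_le_mul hA hB hBnn (mul_nonneg hCq0 (mul_nonneg hL0 hs0))
  have hring : (Cq * (L * ⟪c, p⟫)) * (2 * ε + 3 * (L * (Cn * ε))) = ⟪c, p⟫ * (ε * X) := by
    rw [hXdef]; ring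
  have hfinal2 : ⟪c, p⟫ * (ε * X) ≤ ⟪c, p⟫ * 2 := mul_le_mul_of_nonneg_left hεX hs0
  rw [hexp]
  linarith [t1.1, t2.1, t3.1, hvTv, hN, hring.le, hring.ge, hfinal2]

end KeyBound

/-- The objective `Φ(x) = xᵀQx + 2dᵀx`. -/
noncomputable def Phi {n : ℕ} (Q : Matrix (Fin n) (Fin n) ℝ) (d : Fin n → ℝ)
    (x : Fin n → ℝ) : ℝ :=
  x ⬝ᵥ (Q *ᵥ x) + 2 * (d ⬝ᵥ x)

section QPGlue

variable {n m : ℕ}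

lemma qp_transpose_mulVec (A : Matrix (Fin m) (Fin n) ℝ) (lam : Fin m → ℝ) :
    Aᵀ *ᵥ lam = ∑ i, lam i • (A i) := by
  funext j
  rw [Finset.sum_apply]
  simp only [Matrix.mulVec, dotProduct, Matrix.transpose_apply, Pi.smul_apply,
    smul_eq_mul]
  exact Finset.sum_congr rfl fun i _ => mul_comm _ _

lemma qp_sum_dot (f : Fin m → Fin n → ℝ) (lam : Fin m → ℝ) (p : Fin n → ℝ) :
    (∑ i, lam i • f i) ⬝ᵥ p = ∑ i, lam i * (f i ⬝ᵥ p) := by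
  simp only [dotProduct, Finset.sum_apply, Pi.smul_apply, smul_eq_mul, Finset.mul_sum,
    Finset.sum_mul]
  rw [Finset.sum_comm]
  exact Finset.sum_congr rfl fun i _ => Finset.sum_congr rfl fun j _ => mul_assoc _ _ _

lemma qp_Phi_expand (Q : Matrix (Fin n) (Fin n) ℝ) (hQ : Q.IsSymm) (d x p : Fin n → ℝ) :
    Phi Q d (x + p) = Phi Q d x + (2 * ((Q *ᵥ x + d) ⬝ᵥ p) + p ⬝ᵥ (Q *ᵥ p)) := by
  have hswap : x ⬝ᵥ (Q *ᵥ p) = p ⬝ᵥ (Q *ᵥ x) := by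
    rw [Matrix.dotProduct_mulVec]
    conv_lhs => rw [← hQ]
    rw [Matrix.vecMul_transpose, dotProduct_comm]
  simp only [Phi, Matrix.mulVec_add, dotProduct_add, add_dotProduct]
  ring_nf
  linarith [hswap, dotProduct_comm (Q *ᵥ x) p]

end QPGlue

set_option maxHeartbeats 1000000 in
/-- second-order characterization of local solutions,
Mangasarian / Contesse. `x̄` is a local solution of the QP iff `x̄` is feasible,
satisfies the KKT conditions with some multiplier `λ̄ ≥ 0`, and `pᵀQp ≥ 0` for every
`p` in the cone `{p : a_iᵀp = 0 ∀ i ∈ J_λ̄, a_iᵀp ≤ 0 ∀ i ∈ I_x̄}`. -/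
theorem local_solution_iff_second_order {n m : ℕ}
    (Q : Matrix (Fin n) (Fin n) ℝ) (hQ : Q.IsSymm)
    (d : Fin n → ℝ) (A : Matrix (Fin m) (Fin n) ℝ) (b : Fin m → ℝ)
    (xbar : Fin n → ℝ) :
    (A *ᵥ xbar ≤ b ∧ ∃ ε : ℝ, 0 < ε ∧ ∀ x : Fin n → ℝ, A *ᵥ x ≤ b →
        ‖x - xbar‖ < ε → Phi Q d xbar ≤ Phi Q d x) ↔
      (A *ᵥ xbar ≤ b ∧ ∃ lam : Fin m → ℝ, 0 ≤ lam ∧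
        Q *ᵥ xbar + d = -(Aᵀ *ᵥ lam) ∧ (A *ᵥ xbar - b) ⬝ᵥ lam = 0 ∧
        ∀ p : Fin n → ℝ, (∀ i : Fin m, 0 < lam i → (A *ᵥ p) i = 0) →
          (∀ i : Fin m, (A *ᵥ xbar) i = b i → (A *ᵥ p) i ≤ 0) →
          0 ≤ p ⬝ᵥ (Q *ᵥ p)) := by
  classical
  set toE : (Fin n → ℝ) ≃ₗ[ℝ] EuclideanSpace ℝ (Fin n) :=
    (WithLp.linearEquiv 2 ℝ (Fin n → ℝ)).symm with htoE
  have hinner : ∀ u v : Fin n → ℝ, ⟪toE u, toE v⟫ = u ⬝ᵥ v := by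
    intro u v
    simp [htoE, EuclideanSpace.inner_eq_star_dotProduct, dotProduct_comm]
  constructor
  · -- necessity
    rintro ⟨hfeas, ε, hε, hmin⟩
    refine ⟨hfeas, ?_⟩
    set c : Fin n → ℝ := Q *ᵥ xbar + d with hcdef
    have hfeas' : ∀ i, (A *ᵥ xbar) i ≤ b i := fun i => hfeas i
    have step1 : ∀ p : Fin n → ℝ, (∀ i, (A *ᵥ xbar) i = b i → (A *ᵥ p) i ≤ 0) →
        (0 ≤ c ⬝ᵥ p ∧ (c ⬝ᵥ p = 0 → 0 ≤ p ⬝ᵥ (Q *ᵥ p))) := by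
      intro p hK
      obtain ⟨t₀, ht₀, hray⟩ := qp_ray_lemma (fun i => (A *ᵥ xbar) i) (fun i => (A *ᵥ p) i) b
        hfeas' hK
      have key : ∀ t : ℝ, 0 < t → t ≤ t₀ → t * ‖p‖ < ε →
          0 ≤ 2 * (t * (c ⬝ᵥ p)) + t ^ 2 * (p ⬝ᵥ (Q *ᵥ p)) := by
        intro t ht htt htε
        have hfeas2 : A *ᵥ (xbar + t • p) ≤ b := by
          rw [Pi.le_def]
          intro i
          rw [Matrix.mulVec_add, Matrix.mulVec_smul]
          have h1 := hray t ht htt i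
          simpa using h1
        have hnorm : ‖(xbar + t • p) - xbar‖ < ε := by
          rw [add_sub_cancel_left, norm_smul, Real.norm_eq_abs, abs_of_pos ht]
          exact htε
        have h3 := hmin _ hfeas2 hnorm
        rw [qp_Phi_expand Q hQ d xbar (t • p)] at h3
        have e1 : c ⬝ᵥ (t • p) = t * (c ⬝ᵥ p) := by
          rw [dotProduct_smul, smul_eq_mul]
        have e2 : (t • p) ⬝ᵥ (Q *ᵥ (t • p)) = t ^ 2 * (p ⬝ᵥ (Q *ᵥ p)) := by
          rw [smul_dotProduct, Matrix.mulVec_smul, dotProduct_smul,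
            smul_eq_mul, smul_eq_mul]
          ring
        rw [e1, e2] at h3
        linarith
      constructor
      · by_contra hneg
        push_neg at hneg
        set B : ℝ := p ⬝ᵥ (Q *ᵥ p) with hB
        set t : ℝ := min t₀ (min (ε / (‖p‖ + 1)) ((-(c ⬝ᵥ p)) / (|B| + 1))) with htdef
        have hcpneg : 0 < -(c ⬝ᵥ p) := by linarith
        have ht : 0 < t := lt_min ht₀ (lt_min (by positivity) (by positivity))
        have h1 : t * ‖p‖ < ε := by
          have h2 : t ≤ ε / (‖p‖ + 1) := le_trans (min_le_right _ _) (min_le_left _ _)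
          have h3 : (0:ℝ) ≤ ‖p‖ := norm_nonneg p
          have h4 := mul_le_mul_of_nonneg_right h2 h3
          have h5 : ε / (‖p‖ + 1) * ‖p‖ < ε := by
            rw [div_mul_eq_mul_div, div_lt_iff₀ (by positivity)]
            nlinarith
          linarith
        have h5 := key t ht (min_le_left _ _) h1
        have h6 : t ≤ (-(c ⬝ᵥ p)) / (|B| + 1) := le_trans (min_le_right _ _) (min_le_right _ _)
        have h7 : t * (|B| + 1) ≤ -(c ⬝ᵥ p) := by
          rw [← le_div_iff₀ (by positivity)]
          exact h6
        have h8 : B ≤ |B| := le_abs_self B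
        nlinarith [h5, ht, h7, h8]
      · intro hczero
        by_contra hneg
        push_neg at hneg
        set t : ℝ := min t₀ (ε / (2 * (‖p‖ + 1))) with htdef
        have ht : 0 < t := lt_min ht₀ (by positivity)
        have h1 : t * ‖p‖ < ε := by
          have h2 : t ≤ ε / (2 * (‖p‖ + 1)) := min_le_right _ _
          have h3 : (0:ℝ) ≤ ‖p‖ := norm_nonneg p
          have h4 := mul_le_mul_of_nonneg_right h2 h3
          have h5 : ε / (2 * (‖p‖ + 1)) * ‖p‖ < ε := by
            rw [div_mul_eq_mul_div, div_lt_iff₀ (by positivity)]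
            nlinarith
          linarith
        have h5 := key t ht (min_le_left _ _) h1
        rw [hczero] at h5
        nlinarith [h5, ht, pow_pos ht 2]
    -- Farkas
    set gF : Fin m → EuclideanSpace ℝ (Fin n) :=
      fun i => if (A *ᵥ xbar) i = b i then toE (A i) else 0 with hgF
    have hFar : toE (-c) ∈ coneOf gF := by
      apply qp_farkas
      intro x hx
      have hxK : ∀ i, (A *ᵥ xbar) i = b i → (A *ᵥ (toE.symm x)) i ≤ 0 := by
        intro i hi
        have h1 := hx i
        simp only [hgF, if_pos hi] at h1
        rw [← toE.apply_symm_apply x, hinner] at h1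
        exact h1
      have h2 := (step1 _ hxK).1
      have h3 : ⟪toE (-c), x⟫ = (-c) ⬝ᵥ (toE.symm x) := by rw [← hinner, toE.apply_symm_apply]
      rw [h3, neg_dotProduct]
      linarith
    obtain ⟨μ, hμ0, hμrep⟩ := hFar
    set lam : Fin m → ℝ := fun i => if (A *ᵥ xbar) i = b i then μ i else 0 with hlamdef
    have hlam0 : ∀ i, 0 ≤ lam i := by
      intro i
      simp only [hlamdef]
      split_ifs
      exacts [hμ0 i, le_refl 0]
    have hrepf : -c = ∑ i, lam i • (A i) := by
      have h4 := congrArg toE.symm hμrep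
      rw [toE.symm_apply_apply, map_sum] at h4
      rw [h4]
      refine Finset.sum_congr rfl fun i _ => ?_
      rw [_root_.map_smul]
      by_cases hi : (A *ᵥ xbar) i = b i
      · simp only [hgF, if_pos hi, hlamdef, toE.symm_apply_apply]
      · simp only [hgF, if_neg hi, hlamdef, map_zero, smul_zero, zero_smul]
    refine ⟨lam, fun i => hlam0 i, ?_, ?_, ?_⟩
    · rw [qp_transpose_mulVec, ← hrepf, neg_neg, hcdef]
    · apply Finset.sum_eq_zero
      intro i _
      by_cases hi : (A *ᵥ xbar) i = b i
      · have : (A *ᵥ xbar - b) i = 0 := by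
          rw [Pi.sub_apply, hi, sub_self]
        rw [this, zero_mul]
      · have : lam i = 0 := by simp only [hlamdef, if_neg hi]
        rw [this, mul_zero]
    · intro p hp1 hp2
      have hcp : c ⬝ᵥ p = 0 := by
        have h5 : (-c) ⬝ᵥ p = ∑ i, lam i * (A i ⬝ᵥ p) := by
          rw [hrepf]
          exact qp_sum_dot (fun i => A i) lam p
        have h6 : ∑ i, lam i * (A i ⬝ᵥ p) = 0 := by
          apply Finset.sum_eq_zero
          intro i _
          rcases lt_or_eq_of_le (hlam0 i) with h | h
          · rw [show A i ⬝ᵥ p = (A *ᵥ p) i from rfl, hp1 i h, mul_zero]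
          · rw [← h, zero_mul]
        rw [neg_dotProduct] at h5
        linarith [h5, h6]
      exact (step1 p hp2).2 hcp
  · -- sufficiency
    rintro ⟨hfeas, lam, hlam0, hKKT, hcomp, hsoc⟩
    refine ⟨hfeas, ?_⟩
    have hlam0' : ∀ i, 0 ≤ lam i := fun i => hlam0 i
    have hact : ∀ i, 0 < lam i → (A *ᵥ xbar) i = b i := by
      intro i hi
      have h1 : ∀ j ∈ Finset.univ, ((A *ᵥ xbar) j - b j) * lam j ≤ 0 := fun j _ =>
        mul_nonpos_of_nonpos_of_nonneg (sub_nonpos.mpr (hfeas j)) (hlam0' j)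
      have h2 : ∑ j, ((A *ᵥ xbar) j - b j) * lam j = 0 := by
        have h3 : (A *ᵥ xbar - b) ⬝ᵥ lam = ∑ j, ((A *ᵥ xbar) j - b j) * lam j := rfl
        rw [← h3]
        exact hcomp
      have h3 := (Finset.sum_eq_zero_iff_of_nonpos h1).mp h2 i (Finset.mem_univ i)
      rcases mul_eq_zero.mp h3 with h | h
      · linarith [sub_eq_zero.mp h, hfeas i]
      · exfalso
        rw [h] at hi
        exact lt_irrefl 0 hi
    set c : Fin n → ℝ := Q *ᵥ xbar + d with hcdef
    set TqL : EuclideanSpace ℝ (Fin n) →ₗ[ℝ] EuclideanSpace ℝ (Fin n) :=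
      { toFun := fun x => toE (Q *ᵥ (toE.symm x)),
        map_add' := by
          intro x y
          simp [Matrix.mulVec_add, map_add],
        map_smul' := by
          intro t x
          simp [Matrix.mulVec_smul, _root_.map_smul] } with hTqL
    set Tq : EuclideanSpace ℝ (Fin n) →L[ℝ] EuclideanSpace ℝ (Fin n) :=
      LinearMap.toContinuousLinearMap TqL with hTq
    have hTqapp : ∀ x, Tq x = toE (Q *ᵥ (toE.symm x)) := by
      intro x
      rw [hTq, LinearMap.coe_toContinuousLinearMap']
      rfl
    have hc : toE c = -∑ i, lam i • (toE (A i)) := by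
      rw [hKKT, map_neg, qp_transpose_mulVec, map_sum]
      exact congrArg Neg.neg (Finset.sum_congr rfl fun i _ => _root_.map_smul toE (lam i) (A i))
    have hsoc' : ∀ p : EuclideanSpace ℝ (Fin n),
        (∀ i, 0 < lam i → ⟪toE (A i), p⟫ = 0) →
        (∀ i, (A *ᵥ xbar) i = b i → ⟪toE (A i), p⟫ ≤ 0) → 0 ≤ ⟪p, Tq p⟫ := by
      intro p h1 h2
      have h3 : ⟪p, Tq p⟫ = (toE.symm p) ⬝ᵥ (Q *ᵥ (toE.symm p)) := by
        rw [hTqapp, ← hinner, toE.apply_symm_apply]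
      rw [h3]
      exact hsoc (toE.symm p)
        (fun i hi => by have h := h1 i hi; rw [← toE.apply_symm_apply p, hinner] at h; exact h)
        (fun i hi => by have h := h2 i hi; rw [← toE.apply_symm_apply p, hinner] at h; exact h)
    obtain ⟨ε, hε, hkey⟩ := qp_key_bound (fun i => toE (A i)) lam hlam0'
      (fun i => (A *ᵥ xbar) i = b i) hact (toE c) hc Tq hsoc'
    set T1 : (Fin n → ℝ) →L[ℝ] EuclideanSpace ℝ (Fin n) :=
      LinearMap.toContinuousLinearMap toE.toLinearMap with hT1
    refine ⟨ε / (‖T1‖ + 1), by positivity, ?_⟩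
    intro x hfx hxnorm
    set p : Fin n → ℝ := x - xbar with hpdef
    have hxp : x = xbar + p := by rw [hpdef]; abel
    have hKp : ∀ i, (A *ᵥ xbar) i = b i → (A *ᵥ p) i ≤ 0 := by
      intro i hi
      have h1 : (A *ᵥ p) i = (A *ᵥ x) i - (A *ᵥ xbar) i := by
        rw [hpdef, Matrix.mulVec_sub]
        rfl
      rw [h1, hi]
      have h2 := hfx i
      linarith
    have hnormE : ‖toE p‖ ≤ ε := by
      have h1 : ‖T1 p‖ ≤ ‖T1‖ * ‖p‖ := T1.le_opNorm p
      have h1' : T1 p = toE p := by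
        rw [hT1, LinearMap.coe_toContinuousLinearMap']
        rfl
      rw [h1'] at h1
      have h2 : ‖T1‖ * ‖p‖ ≤ ‖T1‖ * (ε / (‖T1‖ + 1)) :=
        mul_le_mul_of_nonneg_left (le_of_lt hxnorm) (norm_nonneg T1)
      have h3 : ‖T1‖ * (ε / (‖T1‖ + 1)) ≤ ε := by
        rw [mul_comm, div_mul_eq_mul_div, div_le_iff₀ (by positivity)]
        nlinarith [norm_nonneg T1, hε.le]
      linarith
    have h6 := hkey (toE p) (fun i hi => by rw [hinner]; exact hKp i hi) hnormE
    have h7 : ⟪toE c, toE p⟫ = c ⬝ᵥ p := hinner c p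
    have h8 : ⟪toE p, Tq (toE p)⟫ = p ⬝ᵥ (Q *ᵥ p) := by
      rw [hTqapp, toE.symm_apply_apply, hinner]
    rw [h7, h8] at h6
    rw [hxp, qp_Phi_expand Q hQ d xbar p]
    rw [← hcdef]
    linarith [h6]
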